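/- Let A be a finite-dimensional K-vector space with linear Δ : A → A⊗A⊗A and linear maps α₁, α₂ : A → A. Then (A, Δ, α₁, α₂) is a weak totally hom-coassociative ternary coalgebra (i.e., (Δ⊗α₁⊗α₂)∘Δ = (α₁⊗α₂⊗Δ)∘Δ) if and only if the dual map Δ* : A*⊗A*⊗A* → A* makes (A*, Δ*, α₁*, α₂*) a weak totally hom-associative ternary algebra (i.e., Δ*(Δ*(ξ₁,ξ₂,ξ₃), α₁*(ξ₄), α₂*(ξ₅)) = Δ*(α₁*(ξ₁), α₂*(ξ₂), Δ*(ξ₃,ξ₄,ξ₅))). -/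

import Mathlib

set_option maxHeartbeats 1000000


open TensorProduct Module

/-- `(Δ ⊗ α₁ ⊗ α₂)` reassociated to land in the right-nested 5-fold tensor power. -/
noncomputable def coassoc1 {K M : Type*} [Field K] [AddCommGroup M] [Module K M]
    (Δ : M →ₗ[K] M ⊗[K] (M ⊗[K] M)) (α₁ α₂ : M →ₗ[K] M) :
    (M ⊗[K] (M ⊗[K] M)) →ₗ[K] (M ⊗[K] (M ⊗[K] (M ⊗[K] (M ⊗[K] M)))) :=
  (TensorProduct.map (LinearMap.id : M →ₗ[K] M)
      (TensorProduct.assoc K M M (M ⊗[K] M)).toLinearMap).comp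
    ((TensorProduct.assoc K M (M ⊗[K] M) (M ⊗[K] M)).toLinearMap.comp
      (TensorProduct.map Δ (TensorProduct.map α₁ α₂)))

/-- `(α₁ ⊗ Δ ⊗ α₂)` reassociated to land in the right-nested 5-fold tensor power. -/
noncomputable def coassoc2 {K M : Type*} [Field K] [AddCommGroup M] [Module K M]
    (Δ : M →ₗ[K] M ⊗[K] (M ⊗[K] M)) (α₁ α₂ : M →ₗ[K] M) :
    (M ⊗[K] (M ⊗[K] M)) →ₗ[K] (M ⊗[K] (M ⊗[K] (M ⊗[K] (M ⊗[K] M)))) :=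
  (TensorProduct.map (LinearMap.id : M →ₗ[K] M)
      ((TensorProduct.map (LinearMap.id : M →ₗ[K] M)
          (TensorProduct.assoc K M M M).toLinearMap).comp
        (TensorProduct.assoc K M (M ⊗[K] M) M).toLinearMap)).comp
    (TensorProduct.map α₁ (TensorProduct.map Δ α₂))

/-- `(α₁ ⊗ α₂ ⊗ Δ)`. -/
noncomputable def coassoc3 {K M : Type*} [Field K] [AddCommGroup M] [Module K M]
    (Δ : M →ₗ[K] M ⊗[K] (M ⊗[K] M)) (α₁ α₂ : M →ₗ[K] M) :
    (M ⊗[K] (M ⊗[K] M)) →ₗ[K] (M ⊗[K] (M ⊗[K] (M ⊗[K] (M ⊗[K] M)))) :=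
  TensorProduct.map α₁ (TensorProduct.map α₂ Δ)

/-- The natural pairing `A* ⊗ A* ⊗ A* → (A ⊗ A ⊗ A)*`. -/
noncomputable def pair3 (K M : Type*) [Field K] [AddCommGroup M] [Module K M] :
    (Dual K M ⊗[K] (Dual K M ⊗[K] Dual K M)) →ₗ[K] Dual K (M ⊗[K] (M ⊗[K] M)) :=
  (TensorProduct.dualDistrib K M (M ⊗[K] M)).comp
    (TensorProduct.map (LinearMap.id : Dual K M →ₗ[K] Dual K M)
      (TensorProduct.dualDistrib K M M))


lemma dualDistrib_surj (K M N : Type*) [Field K] [AddCommGroup M] [Module K M]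
    [FiniteDimensional K M] [AddCommGroup N] [Module K N] [FiniteDimensional K N] :
    Function.Surjective (TensorProduct.dualDistrib K M N) := by
  let e := TensorProduct.dualDistribEquivOfBasis (Module.Free.chooseBasis K M)
    (Module.Free.chooseBasis K N)
  have he : ⇑(TensorProduct.dualDistrib K M N) = ⇑e := rfl
  rw [he]
  exact e.surjective

lemma map_id_surj {K D X Y : Type*} [Field K] [AddCommMonoid D] [Module K D]
    [AddCommMonoid X] [Module K X] [AddCommMonoid Y] [Module K Y]
    (g : X →ₗ[K] Y) (hg : Function.Surjective g) :
    Function.Surjective (TensorProduct.map (LinearMap.id : D →ₗ[K] D) g) := by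
  intro z
  induction z using TensorProduct.induction_on with
  | zero => exact ⟨0, map_zero _⟩
  | tmul d y =>
    obtain ⟨x, rfl⟩ := hg y
    exact ⟨d ⊗ₜ[K] x, by simp⟩
  | add a b ha hb =>
    obtain ⟨u, rfl⟩ := ha
    obtain ⟨v, rfl⟩ := hb
    exact ⟨u + v, map_add _ _ _⟩

noncomputable def pair5 (K M : Type*) [Field K] [AddCommGroup M] [Module K M] :
    (Dual K M ⊗[K] (Dual K M ⊗[K] (Dual K M ⊗[K] (Dual K M ⊗[K] Dual K M)))) →ₗ[K]
      Dual K (M ⊗[K] (M ⊗[K] (M ⊗[K] (M ⊗[K] M)))) :=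
  (TensorProduct.dualDistrib K M (M ⊗[K] (M ⊗[K] (M ⊗[K] M)))).comp
    (TensorProduct.map LinearMap.id
      ((TensorProduct.dualDistrib K M (M ⊗[K] (M ⊗[K] M))).comp
        (TensorProduct.map LinearMap.id
          ((TensorProduct.dualDistrib K M (M ⊗[K] M)).comp
            (TensorProduct.map LinearMap.id (TensorProduct.dualDistrib K M M))))))

lemma pair5_tmul {K M : Type*} [Field K] [AddCommGroup M] [Module K M]
    (f₁ f₂ f₃ f₄ f₅ : Dual K M) (a b c d e : M) :
    pair5 K M (f₁ ⊗ₜ[K] (f₂ ⊗ₜ[K] (f₃ ⊗ₜ[K] (f₄ ⊗ₜ[K] f₅))))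
      (a ⊗ₜ[K] (b ⊗ₜ[K] (c ⊗ₜ[K] (d ⊗ₜ[K] e))))
      = f₁ a * (f₂ b * (f₃ c * (f₄ d * f₅ e))) := by
  simp [pair5, TensorProduct.dualDistrib_apply]

set_option maxHeartbeats 1000000 in
lemma pair5_surj (K M : Type*) [Field K] [AddCommGroup M] [Module K M]
    [FiniteDimensional K M] : Function.Surjective (pair5 K M) := by
  have s2 := (dualDistrib_surj K M (M ⊗[K] M)).comp
    (map_id_surj _ (dualDistrib_surj K M M))
  rw [← LinearMap.coe_comp] at s2
  have s3 := (dualDistrib_surj K M (M ⊗[K] (M ⊗[K] M))).comp (map_id_surj _ s2)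
  rw [← LinearMap.coe_comp] at s3
  have s4 := (dualDistrib_surj K M (M ⊗[K] (M ⊗[K] (M ⊗[K] M)))).comp (map_id_surj _ s3)
  rw [← LinearMap.coe_comp] at s4
  exact s4

set_option maxHeartbeats 1000000 in
lemma sep5 {K M : Type*} [Field K] [AddCommGroup M] [Module K M]
    [FiniteDimensional K M] (u w : M ⊗[K] (M ⊗[K] (M ⊗[K] (M ⊗[K] M))))
    (h : ∀ ξ₁ ξ₂ ξ₃ ξ₄ ξ₅ : Dual K M,
      pair5 K M (ξ₁ ⊗ₜ[K] (ξ₂ ⊗ₜ[K] (ξ₃ ⊗ₜ[K] (ξ₄ ⊗ₜ[K] ξ₅)))) u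
        = pair5 K M (ξ₁ ⊗ₜ[K] (ξ₂ ⊗ₜ[K] (ξ₃ ⊗ₜ[K] (ξ₄ ⊗ₜ[K] ξ₅)))) w) : u = w := by
  have key : ∀ v, pair5 K M v u = pair5 K M v w := by
    intro v
    induction v using TensorProduct.induction_on with
    | zero => simp
    | add x y hx hy => simp [map_add, hx, hy]
    | tmul ξ₁ r =>
      induction r using TensorProduct.induction_on with
      | zero => simp [tmul_zero]
      | add x y hx hy => simp [tmul_add, map_add, hx, hy]
      | tmul ξ₂ r =>
        induction r using TensorProduct.induction_on with
        | zero => simp [tmul_zero]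
        | add x y hx hy => simp [tmul_add, map_add, hx, hy]
        | tmul ξ₃ r =>
          induction r using TensorProduct.induction_on with
          | zero => simp [tmul_zero]
          | add x y hx hy => simp [tmul_add, map_add, hx, hy]
          | tmul ξ₄ ξ₅ => exact h ξ₁ ξ₂ ξ₃ ξ₄ ξ₅
  letI : AddCommGroup (M ⊗[K] (M ⊗[K] (M ⊗[K] (M ⊗[K] M)))) :=
    Module.addCommMonoidToAddCommGroup K
  let b := Basis.ofVectorSpace K (M ⊗[K] (M ⊗[K] (M ⊗[K] (M ⊗[K] M))))
  apply b.repr.injective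
  ext i
  have hu : b.repr u i = b.coord i u := rfl
  have hw : b.repr w i = b.coord i w := rfl
  rw [hu, hw]
  obtain ⟨v, hv⟩ := pair5_surj K M (b.coord i)
  rw [← hv]
  exact key v

/-- `(A, Δ, α₁, α₂)` is a weak totally hom-coassociative ternary coalgebra iff the
dual product `Δ*` makes `(A*, Δ*, α₁*, α₂*)` a weak totally hom-associative ternary
algebra. -/
theorem stmt9 {K A : Type*} [Field K] [AddCommGroup A] [Module K A]
    [FiniteDimensional K A]
    (Δ : A →ₗ[K] A ⊗[K] (A ⊗[K] A)) (α₁ α₂ : A →ₗ[K] A)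
    (δ : Dual K A →ₗ[K] Dual K A →ₗ[K] Dual K A →ₗ[K] Dual K A)
    (hδ : ∀ (ξ η γ : Dual K A) (x : A),
      δ ξ η γ x = pair3 K A (ξ ⊗ₜ[K] (η ⊗ₜ[K] γ)) (Δ x)) :
    (coassoc1 Δ α₁ α₂).comp Δ = (coassoc3 Δ α₁ α₂).comp Δ ↔
    (∀ ξ₁ ξ₂ ξ₃ ξ₄ ξ₅ : Dual K A,
      δ (δ ξ₁ ξ₂ ξ₃) (α₁.dualMap ξ₄) (α₂.dualMap ξ₅)
        = δ (α₁.dualMap ξ₁) (α₂.dualMap ξ₂) (δ ξ₃ ξ₄ ξ₅)) := by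
  
  have key1 : ∀ (ξ₁ ξ₂ ξ₃ ξ₄ ξ₅ : Dual K A) (x : A),
      δ (δ ξ₁ ξ₂ ξ₃) (α₁.dualMap ξ₄) (α₂.dualMap ξ₅) x
        = pair5 K A (ξ₁ ⊗ₜ[K] (ξ₂ ⊗ₜ[K] (ξ₃ ⊗ₜ[K] (ξ₄ ⊗ₜ[K] ξ₅))))
            (coassoc1 Δ α₁ α₂ (Δ x)) := by
    intro ξ₁ ξ₂ ξ₃ ξ₄ ξ₅ x
    rw [hδ]
    generalize Δ x = t
    induction t using TensorProduct.induction_on with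
    | zero => simp
    | add u v hu hv => simp only [map_add, hu, hv]
    | tmul a r =>
      induction r using TensorProduct.induction_on with
      | zero => simp [tmul_zero]
      | add u v hu hv => simp only [tmul_add, map_add, hu, hv]
      | tmul b c =>
        simp only [pair3, coassoc1, LinearMap.coe_comp, Function.comp_apply,
          TensorProduct.map_tmul, TensorProduct.dualDistrib_apply, LinearMap.id_coe,
          id_eq, LinearMap.dualMap_apply]
        rw [hδ]
        generalize Δ a = s
        induction s using TensorProduct.induction_on with
        | zero => simp
        | add u v hu hv =>
          simp only [map_add, add_tmul, add_mul, hu, hv]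
        | tmul p r =>
          induction r using TensorProduct.induction_on with
          | zero => simp [tmul_zero, zero_tmul]
          | add u v hu hv =>
            simp only [tmul_add, add_tmul, map_add, add_mul, hu, hv]
          | tmul q r =>
            simp only [pair3, LinearMap.coe_comp, Function.comp_apply,
              TensorProduct.map_tmul, TensorProduct.dualDistrib_apply,
              LinearMap.id_coe, id_eq, TensorProduct.assoc_tmul,
              LinearEquiv.coe_coe, pair5_tmul]
            ring
  have key3 : ∀ (ξ₁ ξ₂ ξ₃ ξ₄ ξ₅ : Dual K A) (x : A),
      δ (α₁.dualMap ξ₁) (α₂.dualMap ξ₂) (δ ξ₃ ξ₄ ξ₅) x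
        = pair5 K A (ξ₁ ⊗ₜ[K] (ξ₂ ⊗ₜ[K] (ξ₃ ⊗ₜ[K] (ξ₄ ⊗ₜ[K] ξ₅))))
            (coassoc3 Δ α₁ α₂ (Δ x)) := by
    intro ξ₁ ξ₂ ξ₃ ξ₄ ξ₅ x
    rw [hδ]
    generalize Δ x = t
    induction t using TensorProduct.induction_on with
    | zero => simp
    | add u v hu hv => simp only [map_add, hu, hv]
    | tmul a r =>
      induction r using TensorProduct.induction_on with
      | zero => simp [tmul_zero]
      | add u v hu hv => simp only [tmul_add, map_add, hu, hv]
      | tmul b c =>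
        simp only [pair3, coassoc3, LinearMap.coe_comp, Function.comp_apply,
          TensorProduct.map_tmul, TensorProduct.dualDistrib_apply, LinearMap.id_coe,
          id_eq, LinearMap.dualMap_apply]
        rw [hδ]
        generalize Δ c = s
        induction s using TensorProduct.induction_on with
        | zero => simp
        | add u v hu hv =>
          simp only [map_add, tmul_add, mul_add, hu, hv]
        | tmul p r =>
          induction r using TensorProduct.induction_on with
          | zero => simp [tmul_zero]
          | add u v hu hv =>
            simp only [tmul_add, map_add, mul_add, hu, hv]
          | tmul q r =>
            simp only [pair3, LinearMap.coe_comp, Function.comp_apply,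
              TensorProduct.map_tmul, TensorProduct.dualDistrib_apply,
              LinearMap.id_coe, id_eq, pair5_tmul]
  constructor
  · intro h ξ₁ ξ₂ ξ₃ ξ₄ ξ₅
    apply LinearMap.ext
    intro x
    rw [key1, key3]
    have := LinearMap.congr_fun h x
    simp only [LinearMap.comp_apply] at this
    rw [this]
  · intro h
    apply LinearMap.ext
    intro x
    simp only [LinearMap.comp_apply]
    apply sep5
    intro ξ₁ ξ₂ ξ₃ ξ₄ ξ₅
    rw [← key1, ← key3]
    exact LinearMap.congr_fun (h ξ₁ ξ₂ ξ₃ ξ₄ ξ₅) x
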